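/- Let A be a symmetric n×n real matrix such that σ_k(A) > 0 and such that at most one eigenvalue of A (counted with multiplicity) is negative. Then A lies in Γ_k⁺, i.e., A belongs to the connected component of the set {M : M symmetric n×n real matrix with σ_k(M) > 0} (as a subset of the space of symmetric n×n real matrices) that contains the identity matrix. -/

import Mathlib

/-- The `k`-th elementary symmetric function of a square real matrix:
the sum of its `k × k` principal minors. -/
noncomputable def sigmaK {ι : Type*} [Fintype ι] [DecidableEq ι] (k : ℕ)
    (A : Matrix ι ι ℝ) : ℝ :=
  ∑ s ∈ (Finset.univ : Finset ι).powersetCard k,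
    Matrix.det (fun i j : {x : ι // x ∈ s} => A i.1 j.1)

/-- The Hessian matrix of `u` at `x`, with entries `∂ᵢ∂ⱼ u (x)`. -/
noncomputable def hessian {ι : Type*} [Fintype ι] [DecidableEq ι]
    (u : (ι → ℝ) → ℝ) (x : ι → ℝ) : Matrix ι ι ℝ :=
  fun i j => fderiv ℝ (fun y => fderiv ℝ u y (Pi.single j 1)) x (Pi.single i 1)

open Finset Matrix Polynomial

section Aux

variable {ι : Type*} [Fintype ι] [DecidableEq ι]

/-- Principal minor of `M` on the index set `s`. -/
noncomputable def minorD (M : Matrix ι ι ℝ) (s : Finset ι) : ℝ :=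
  Matrix.det (fun i j : {x : ι // x ∈ s} => M i.1 j.1)

lemma det_irrel {m : Type*} {i1 i2 : Fintype m} {d1 d2 : DecidableEq m} (M : m → m → ℝ) :
    @Matrix.det m d1 i1 ℝ _ M = @Matrix.det m d2 i2 ℝ _ M := by
  cases Subsingleton.elim i1 i2
  cases Subsingleton.elim d1 d2
  rfl

lemma sigmaK_eq_sum_minorD (k : ℕ) (M : Matrix ι ι ℝ) :
    sigmaK k M = ∑ s ∈ (Finset.univ : Finset ι).powersetCard k, minorD M s := rfl

/-- The elementary symmetric function of a vector. -/
noncomputable def ekv (k : ℕ) (d : ι → ℝ) : ℝ :=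
  ∑ s ∈ (Finset.univ : Finset ι).powersetCard k, ∏ i ∈ s, d i

lemma sigmaK_diagonal (k : ℕ) (d : ι → ℝ) :
    sigmaK k (Matrix.diagonal d) = ekv k d := by
  refine Finset.sum_congr rfl fun s _ => ?_
  have h : (fun i j : {x : ι // x ∈ s} => Matrix.diagonal d i.1 j.1)
      = Matrix.diagonal (fun i : {x : ι // x ∈ s} => d i.1) := by
    ext i j
    by_cases hij : i = j
    · subst hij; simp
    · rw [Matrix.diagonal_apply_ne _ hij,
        Matrix.diagonal_apply_ne _ (fun h => hij (Subtype.ext h))]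
  rw [h, Matrix.det_diagonal]
  exact Finset.prod_coe_sort s d

/-- determinant of a matrix whose rows off `s` are the corresponding rows
of the identity matrix. -/
lemma det_piecewise_one (M : Matrix ι ι ℝ) (s : Finset ι) :
    Matrix.det (s.piecewise (M : ι → ι → ℝ) (1 : Matrix ι ι ℝ)) = minorD M s := by
  set N : Matrix ι ι ℝ := s.piecewise (M : ι → ι → ℝ) (1 : Matrix ι ι ℝ) with hN
  rw [Matrix.det_toBlock N (· ∈ s)]
  have h21 : N.toBlock (fun j => ¬ j ∈ s) (· ∈ s) = 0 := by
    ext i j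
    have : N i.1 j.1 = (1 : Matrix ι ι ℝ) i.1 j.1 := by
      simp [hN, Finset.piecewise, i.2]
    rw [Matrix.toBlock_apply, this, Matrix.one_apply_ne]
    · rfl
    · exact fun h => i.2 (by rw [h]; exact j.2)
  have h22 : N.toBlock (fun j => ¬ j ∈ s) (fun j => ¬ j ∈ s) = 1 := by
    ext i j
    have : N i.1 j.1 = (1 : Matrix ι ι ℝ) i.1 j.1 := by
      simp [hN, Finset.piecewise, i.2]
    rw [Matrix.toBlock_apply, this]
    by_cases hij : i = j
    · subst hij; simp
    · rw [Matrix.one_apply_ne (fun h => hij (Subtype.ext h)),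
        Matrix.one_apply_ne hij]
  have h11 : N.toBlock (· ∈ s) (· ∈ s)
      = (fun i j : {x : ι // x ∈ s} => M i.1 j.1) := by
    ext i j
    rw [Matrix.toBlock_apply]; simp [hN, Finset.piecewise, i.2]
  rw [h21, h22]
  have main : ∀ (P : Matrix {a : ι // a ∈ s} {a : ι // a ∈ s} ℝ)
      (Q : Matrix {a : ι // a ∈ s} {a : ι // ¬ a ∈ s} ℝ),
      Matrix.det (Matrix.fromBlocks P Q 0 1) = Matrix.det P := by
    intro P Q
    rw [Matrix.det_fromBlocks_zero₂₁, Matrix.det_one, mul_one]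
  refine (det_irrel _).trans (((main _ _).trans ?_))
  rw [h11]
  unfold minorD
  exact det_irrel _

lemma det_smul_one_add (x : ℝ) (M : Matrix ι ι ℝ) :
    Matrix.det (x • (1 : Matrix ι ι ℝ) + M)
      = ∑ s : Finset ι, x ^ (#sᶜ) * minorD M s := by
  have hadd : (x • (1 : Matrix ι ι ℝ) + M)
      = ((M : ι → ι → ℝ) + (x • (1 : Matrix ι ι ℝ) : ι → ι → ℝ)) := by
    funext i j; simp [Matrix.add_apply]; ring
  have key := (Matrix.detRowAlternating :
      (ι → ℝ) [⋀^ι]→ₗ[ℝ] ℝ).toMultilinearMap.map_add_univ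
      (M : ι → ι → ℝ) (x • (1 : Matrix ι ι ℝ) : ι → ι → ℝ)
  have hdet : ∀ N : Matrix ι ι ℝ, Matrix.det N
      = (Matrix.detRowAlternating : (ι → ℝ) [⋀^ι]→ₗ[ℝ] ℝ).toMultilinearMap N := by
    intro N; rfl
  rw [hdet, hadd]
  refine key.trans ?_
  refine Finset.sum_congr rfl fun s _ => ?_
  -- rows: in `s` from `M`, off `s` from `x • 1`
  have hb : s.piecewise (M : ι → ι → ℝ) (x • (1 : Matrix ι ι ℝ) : ι → ι → ℝ)
      = sᶜ.piecewise (fun i => x • (s.piecewise (M : ι → ι → ℝ) (1 : Matrix ι ι ℝ)) i)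
          (s.piecewise (M : ι → ι → ℝ) (1 : Matrix ι ι ℝ)) := by
    funext i
    by_cases hi : i ∈ s
    · simp [Finset.piecewise, hi]
    · simp [Finset.piecewise, hi]
      rfl
  rw [hb, (Matrix.detRowAlternating :
      (ι → ℝ) [⋀^ι]→ₗ[ℝ] ℝ).toMultilinearMap.map_piecewise_smul
      (fun _ => x) _ sᶜ]
  rw [Finset.prod_const, smul_eq_mul]
  exact congrArg _ (det_piecewise_one M s)

/-- The polynomial `x ↦ det (x • 1 + M)`. -/
noncomputable def sigPoly (M : Matrix ι ι ℝ) : Polynomial ℝ :=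
  ∑ s : Finset ι, Polynomial.C (minorD M s) * Polynomial.X ^ (#sᶜ)

lemma sigPoly_eval (x : ℝ) (M : Matrix ι ι ℝ) :
    (sigPoly M).eval x = Matrix.det (x • (1 : Matrix ι ι ℝ) + M) := by
  rw [det_smul_one_add, sigPoly, Polynomial.eval_finset_sum]
  exact Finset.sum_congr rfl fun s _ => by
    rw [Polynomial.eval_mul, Polynomial.eval_C, Polynomial.eval_pow, Polynomial.eval_X, mul_comm]

lemma sigPoly_coeff {k : ℕ} (hk : k ≤ Fintype.card ι) (M : Matrix ι ι ℝ) :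
    (sigPoly M).coeff (Fintype.card ι - k) = sigmaK k M := by
  rw [sigPoly, Polynomial.finset_sum_coeff]
  have hterm : ∀ s : Finset ι,
      (Polynomial.C (minorD M s) * Polynomial.X ^ (#sᶜ)).coeff (Fintype.card ι - k)
        = if #s = k then minorD M s else 0 := by
    intro s
    rw [Polynomial.coeff_C_mul, Polynomial.coeff_X_pow]
    have h1 : #sᶜ = Fintype.card ι - #s := Finset.card_compl s
    have h2 : #s ≤ Fintype.card ι := by
      simpa using Finset.card_le_univ s
    by_cases h : #s = k
    · rw [if_pos h, if_pos (by omega), mul_one]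
    · rw [if_neg (by omega), if_neg h, mul_zero]
  rw [Finset.sum_congr rfl fun s _ => hterm s, Finset.sum_ite, Finset.sum_const_zero,
    add_zero, sigmaK_eq_sum_minorD]
  apply Finset.sum_congr _ fun s _ => rfl
  ext s
  simp [Finset.mem_powersetCard]

lemma sigmaK_conj (U : Matrix ι ι ℝ) (hU : U ∈ Matrix.unitaryGroup ι ℝ)
    (k : ℕ) (M : Matrix ι ι ℝ) :
    sigmaK k (U * M * star U) = sigmaK k M := by
  by_cases hk : k ≤ Fintype.card ι
  · have hU1 : U * star U = 1 := Matrix.mem_unitaryGroup_iff.mp hU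
    have heval : ∀ x : ℝ, (sigPoly (U * M * star U)).eval x = (sigPoly M).eval x := by
      intro x
      rw [sigPoly_eval, sigPoly_eval]
      have hx : x • (1 : Matrix ι ι ℝ) + U * M * star U
          = U * (x • (1 : Matrix ι ι ℝ) + M) * star U := by
        rw [Matrix.mul_add, Matrix.add_mul]
        congr 1
        rw [mul_smul_comm, smul_mul_assoc, Matrix.mul_one, hU1]
      rw [hx, Matrix.det_mul, Matrix.det_mul]
      have : Matrix.det U * Matrix.det (star U) = 1 := by
        rw [← Matrix.det_mul, hU1, Matrix.det_one]
      calc Matrix.det U * Matrix.det (x • 1 + M) * Matrix.det (star U)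
          = (Matrix.det U * Matrix.det (star U)) * Matrix.det (x • 1 + M) := by ring
        _ = Matrix.det (x • 1 + M) := by rw [this, one_mul]
    have hpoly : sigPoly (U * M * star U) = sigPoly M := Polynomial.funext heval
    rw [← sigPoly_coeff hk, ← sigPoly_coeff hk M, hpoly]
  · have hempty : (Finset.univ : Finset ι).powersetCard k = ∅ := by
      rw [Finset.powersetCard_eq_empty]
      simpa using Nat.lt_of_not_le hk
    rw [sigmaK_eq_sum_minorD, sigmaK_eq_sum_minorD, hempty]
    simp

lemma ekv_pos {k : ℕ} (hk : k ≤ Fintype.card ι) {d : ι → ℝ}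
    (hd : ∀ i, 0 < d i) : 0 < ekv k d := by
  refine Finset.sum_pos (fun s _ => Finset.prod_pos fun i _ => hd i) ?_
  rw [Finset.powersetCard_nonempty]
  simpa using hk

lemma ekv_update (k : ℕ) (d : ι → ℝ) (j : ι) (x : ℝ) :
    ekv k (Function.update d j x)
      = x * (∑ s ∈ (Finset.univ : Finset ι).powersetCard k,
          if j ∈ s then ∏ i ∈ s \ {j}, d i else 0)
        + (∑ s ∈ (Finset.univ : Finset ι).powersetCard k,
          if j ∈ s then 0 else ∏ i ∈ s, d i) := by
  rw [ekv, Finset.mul_sum, ← Finset.sum_add_distrib]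
  refine Finset.sum_congr rfl fun s _ => ?_
  by_cases h : j ∈ s
  · rw [Finset.prod_update_of_mem h, if_pos h, if_pos h, add_zero]
  · rw [Finset.prod_update_of_notMem h, if_neg h, if_neg h, mul_zero, zero_add]

end Aux

/-- A symmetric matrix with `σ_k > 0` and at most one negative eigenvalue lies in
`Γ_k⁺`, the connected component of `{M symmetric : σ_k(M) > 0}` containing the
identity. -/
theorem mem_gammaK_of_at_most_one_negative_eigenvalue (n k : ℕ)
    (A : Matrix (Fin n) (Fin n) ℝ) (hA : A.IsHermitian)
    (hpos : 0 < sigmaK k A)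
    (hneg : (Finset.univ.filter fun i => hA.eigenvalues i < 0).card ≤ 1) :
    A ∈ connectedComponentIn
      {M : Matrix (Fin n) (Fin n) ℝ | M.IsSymm ∧ 0 < sigmaK k M} 1 := by
  classical
  set F : Set (Matrix (Fin n) (Fin n) ℝ) :=
    {M : Matrix (Fin n) (Fin n) ℝ | M.IsSymm ∧ 0 < sigmaK k M} with hF
  -- trivial case n = 0
  rcases Nat.eq_zero_or_pos n with hn0 | hn0
  · subst hn0
    have hA1 : A = 1 := by ext i j; exact i.elim0
    rw [hA1]
    exact mem_connectedComponentIn ⟨by rw [Matrix.IsSymm]; ext i j; exact i.elim0,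
      by rw [← hA1]; exact hpos⟩
  -- setup
  have hk : k ≤ n := by
    by_contra hkn
    have hempty : (Finset.univ : Finset (Fin n)).powersetCard k = ∅ := by
      rw [Finset.powersetCard_eq_empty]; simpa using Nat.lt_of_not_le hkn
    rw [sigmaK_eq_sum_minorD, hempty, Finset.sum_empty] at hpos
    exact lt_irrefl 0 hpos
  set U : Matrix (Fin n) (Fin n) ℝ := (hA.eigenvectorUnitary : Matrix (Fin n) (Fin n) ℝ)
    with hUdef
  have hU : U ∈ Matrix.unitaryGroup (Fin n) ℝ := hA.eigenvectorUnitary.2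
  have hU1 : U * star U = 1 := Matrix.mem_unitaryGroup_iff.mp hU
  set lam : Fin n → ℝ := hA.eigenvalues with hlamdef
  have hAeq : A = U * Matrix.diagonal lam * star U := by
    have := hA.spectral_theorem
    simpa [RCLike.ofReal_real_eq_id] using this
  set f : (Fin n → ℝ) → Matrix (Fin n) (Fin n) ℝ :=
    fun d => U * Matrix.diagonal d * star U with hfdef
  -- symmetry of f d
  have hsym : ∀ d : Fin n → ℝ, (f d).IsSymm := by
    intro d
    have hherm : (f d).IsHermitian := by
      rw [Matrix.IsHermitian, hfdef]
      simp only [Matrix.conjTranspose_mul, Matrix.conjTranspose_conjTranspose]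
      have h1 : (star U : Matrix (Fin n) (Fin n) ℝ)ᴴ = U := by
        rw [Matrix.star_eq_conjTranspose, Matrix.conjTranspose_conjTranspose]
      have h2 : (Matrix.diagonal d)ᴴ = Matrix.diagonal d := by
        rw [Matrix.diagonal_conjTranspose]; simp
      rw [h1, h2, Matrix.star_eq_conjTranspose, mul_assoc]
    rw [Matrix.IsSymm, ← Matrix.conjTranspose_eq_transpose_of_trivial]
    exact hherm
  -- sigmaK of f d
  have hsig : ∀ d : Fin n → ℝ, sigmaK k (f d) = ekv k d := by
    intro d
    rw [hfdef]
    rw [sigmaK_conj U hU, sigmaK_diagonal]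
  -- continuity
  have hcontf : ∀ g : ℝ → (Fin n → ℝ), Continuous g → Continuous fun t => f (g t) := by
    intro g hg
    exact (continuous_const.matrix_mul (hg.matrix_diagonal)).matrix_mul continuous_const
  -- choose the possibly-negative index j
  obtain ⟨j, hj⟩ : ∃ j : Fin n, ∀ i, i ≠ j → 0 ≤ lam i := by
    by_cases hex : ∃ j, lam j < 0
    · obtain ⟨j, hjneg⟩ := hex
      refine ⟨j, fun i hij => ?_⟩
      by_contra hi
      have hi' : lam i < 0 := lt_of_not_ge hi
      have hsubset : ({i, j} : Finset (Fin n)) ⊆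
          Finset.univ.filter fun i => lam i < 0 := by
        intro x hx
        rcases Finset.mem_insert.mp hx with rfl | hx
        · exact Finset.mem_filter.mpr ⟨Finset.mem_univ _, hi'⟩
        · rw [Finset.mem_singleton] at hx; subst hx
          exact Finset.mem_filter.mpr ⟨Finset.mem_univ _, hjneg⟩
      have hcard2 : ({i, j} : Finset (Fin n)).card = 2 := by
        rw [Finset.card_insert_of_notMem (by simpa using hij), Finset.card_singleton]
      have := Finset.card_le_card hsubset
      omega
    · push_neg at hex
      exact ⟨⟨0, hn0⟩, fun i _ => hex i⟩
  set lp : Fin n → ℝ := fun i => max (lam i) 0 with hlpdef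
  have hlp_nonneg : ∀ i, 0 ≤ lp i := fun i => le_max_right _ _
  have hlam_eq : ∀ i, i ≠ j → lp i = lam i := fun i hi => max_eq_left (hj i hi)
  set E1 : ℝ := ∑ s ∈ (Finset.univ : Finset (Fin n)).powersetCard k,
      if j ∈ s then ∏ i ∈ s \ {j}, lp i else 0 with hE1def
  set E0 : ℝ := ∑ s ∈ (Finset.univ : Finset (Fin n)).powersetCard k,
      if j ∈ s then 0 else ∏ i ∈ s, lp i with hE0def
  have hE1 : 0 ≤ E1 := by
    refine Finset.sum_nonneg fun s _ => ?_
    split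
    · exact Finset.prod_nonneg fun i _ => hlp_nonneg i
    · exact le_rfl
  have hlam_upd : lam = Function.update lp j (lam j) := by
    funext i
    by_cases hi : i = j
    · subst hi; simp
    · rw [Function.update_of_ne hi, hlam_eq i hi]
  have heklam : ekv k lam = lam j * E1 + E0 := by
    conv_lhs => rw [hlam_upd]
    rw [ekv_update, ← hE1def, ← hE0def]
  have heklp : ekv k lp = lp j * E1 + E0 := by
    conv_lhs => rw [← Function.update_eq_self j lp]
    rw [ekv_update, ← hE1def, ← hE0def]
  have heklam_pos : 0 < ekv k lam := by
    have : sigmaK k A = ekv k lam := by rw [hAeq]; exact hsig lam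
    rwa [this] at hpos
  have heklp_pos : 0 < ekv k lp := by
    have h1 : lam j ≤ lp j := le_max_left _ _
    have := mul_le_mul_of_nonneg_right h1 hE1
    rw [heklp]; rw [heklam] at heklam_pos; linarith
  -- stage paths
  set g1 : ℝ → (Fin n → ℝ) :=
    fun t => Function.update lp j ((1 - t) * lam j + t * lp j) with hg1def
  set g2 : ℝ → (Fin n → ℝ) := fun t i => (1 - t) * lp i + t with hg2def
  have hg1cont : Continuous g1 := by
    apply continuous_pi
    intro i
    simp only [hg1def]
    by_cases hi : i = j
    · subst hi
      simp only [Function.update_self]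
      fun_prop
    · simp only [Function.update_of_ne hi]
      exact continuous_const
  have hg2cont : Continuous g2 := by fun_prop
  have hg1pos : ∀ t ∈ Set.Icc (0:ℝ) 1, 0 < ekv k (g1 t) := by
    intro t ht
    have : ekv k (g1 t) = (1 - t) * ekv k lam + t * ekv k lp := by
      simp only [hg1def]
      rw [ekv_update, ← hE1def, ← hE0def, heklam, heklp]
      ring
    rw [this]
    obtain ⟨ht0, ht1⟩ := ht
    rcases eq_or_lt_of_le ht1 with rfl | htlt
    · have : (1 - 1) * ekv k lam + 1 * ekv k lp = ekv k lp := by ring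
      rw [this]; exact heklp_pos
    · have h1 : 0 < (1 - t) * ekv k lam := mul_pos (by linarith) heklam_pos
      have h2 : 0 ≤ t * ekv k lp := mul_nonneg ht0 (le_of_lt heklp_pos)
      linarith
  have hg2pos : ∀ t ∈ Set.Icc (0:ℝ) 1, 0 < ekv k (g2 t) := by
    intro t ht
    obtain ⟨ht0, ht1⟩ := ht
    rcases eq_or_lt_of_le ht0 with rfl | htpos
    · have : g2 0 = lp := by funext i; simp [hg2def]
      rwa [this]
    · refine ekv_pos (by simpa using hk) fun i => ?_
      have h1 : 0 ≤ (1 - t) * lp i := mul_nonneg (by linarith) (hlp_nonneg i)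
      simp only [hg2def]
      linarith
  -- path endpoints
  have hg10 : g1 0 = lam :=
    (congrArg (Function.update lp j)
      (by ring : (1 - (0:ℝ)) * lam j + 0 * lp j = lam j)).trans hlam_upd.symm
  have hg11 : g1 1 = lp :=
    (congrArg (Function.update lp j)
      (by ring : (1 - (1:ℝ)) * lam j + 1 * lp j = lp j)).trans
      (Function.update_eq_self j lp)
  have hf10 : f (g1 0) = A := by rw [hg10]; exact hAeq.symm
  have hf11 : f (g1 1) = f lp := by rw [hg11]
  have hf20 : f (g2 0) = f lp := by
    have : g2 0 = lp := by funext i; show (1 - (0:ℝ)) * lp i + 0 = lp i; ring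
    rw [this]
  have hf21 : f (g2 1) = 1 := by
    have h1 : g2 1 = fun _ => (1:ℝ) := by
      funext i; show (1 - (1:ℝ)) * lp i + 1 = 1; ring
    rw [h1]
    show U * Matrix.diagonal (fun _ : Fin n => (1:ℝ)) * star U = 1
    rw [Matrix.diagonal_one, Matrix.mul_one, hU1]
  -- the two preconnected sets
  set S1 : Set (Matrix (Fin n) (Fin n) ℝ) := (fun t => f (g1 t)) '' Set.Icc 0 1 with hS1def
  set S2 : Set (Matrix (Fin n) (Fin n) ℝ) := (fun t => f (g2 t)) '' Set.Icc 0 1 with hS2def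
  have hS1conn : IsPreconnected S1 :=
    isPreconnected_Icc.image _ ((hcontf g1 hg1cont).continuousOn)
  have hS2conn : IsPreconnected S2 :=
    isPreconnected_Icc.image _ ((hcontf g2 hg2cont).continuousOn)
  have hS1F : S1 ⊆ F := by
    rintro _ ⟨t, ht, rfl⟩
    exact ⟨hsym _, by rw [hsig]; exact hg1pos t ht⟩
  have hS2F : S2 ⊆ F := by
    rintro _ ⟨t, ht, rfl⟩
    exact ⟨hsym _, by rw [hsig]; exact hg2pos t ht⟩
  have h1S2 : (1 : Matrix (Fin n) (Fin n) ℝ) ∈ S2 :=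
    ⟨1, by constructor <;> norm_num, hf21⟩
  have hlpS2 : f lp ∈ S2 := ⟨0, by constructor <;> norm_num, hf20⟩
  have hlpS1 : f lp ∈ S1 := ⟨1, by constructor <;> norm_num, hf11⟩
  have hAS1 : A ∈ S1 := ⟨0, by constructor <;> norm_num, hf10⟩
  have hflp_mem : f lp ∈ connectedComponentIn F 1 :=
    hS2conn.subset_connectedComponentIn h1S2 hS2F hlpS2
  have hcomp_eq : connectedComponentIn F 1 = connectedComponentIn F (f lp) :=
    connectedComponentIn_eq hflp_mem
  rw [hF] at hcomp_eq ⊢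
  rw [hcomp_eq]
  exact hS1conn.subset_connectedComponentIn hlpS1 hS1F hAS1
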